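/- The symmetric big q-Jacobi polynomials satisfy P_n(-x; a, a, -a; q) = (-1)^n P_n(x; a, a, -a; q). -/

import Mathlib

set_option maxHeartbeats 2000000
set_option maxRecDepth 10000

/-- q-shifted factorial `(b;q)_k`. -/
noncomputable def qp (q b : ℂ) (k : ℕ) : ℂ := ∏ j ∈ Finset.range k, (1 - b * q ^ j)

/-- Big q-Jacobi polynomial `P_n(x;a,b,c;q)` as a terminating ₃φ₂ sum. -/
noncomputable def bigqJacobi (q a b c x : ℂ) (n : ℕ) : ℂ :=
  ∑ k ∈ Finset.range (n + 1),
    qp q (q ^ (-(n : ℤ))) k * qp q (q ^ ((n : ℤ) + 1) * (a * b)) k * qp q x k /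
      (qp q q k * qp q (q * a) k * qp q (q * c) k) * q ^ k

namespace Stmt8Aux

lemma qp_zero (q b : ℂ) : qp q b 0 = 1 := by simp [qp]

lemma qp_succ (q b : ℂ) (k : ℕ) : qp q b (k+1) = qp q b k * (1 - b * q ^ k) :=
  Finset.prod_range_succ _ _

lemma qp_succ' (q b : ℂ) (k : ℕ) : qp q b (k+1) = (1 - b) * qp q (q*b) k := by
  rw [qp, Finset.prod_range_succ']
  simp only [pow_zero, mul_one, qp]
  rw [mul_comm]
  congr 1
  refine Finset.prod_congr rfl fun j _ => ?_
  ring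

lemma qp_eq_zero {q b : ℂ} {k j : ℕ} (hj : j < k) (h : b * q ^ j = 1) : qp q b k = 0 :=
  Finset.prod_eq_zero (Finset.mem_range.2 hj) (by rw [h]; ring)

lemma one_sub_ne (q c : ℂ) (hq : q ≠ 0) (m : ℕ) (_hm : 1 ≤ m)
    (h : c ≠ q ^ (-(m:ℤ))) : 1 - q ^ m * c ≠ 0 := by
  intro h0
  apply h
  rw [zpow_neg, zpow_natCast]
  have hp : (q:ℂ) ^ m ≠ 0 := pow_ne_zero _ hq
  field_simp
  linear_combination -h0

lemma qpq_ne (q : ℂ) (hroot : ∀ m : ℕ, 1 ≤ m → q ^ m ≠ 1) (k : ℕ) :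
    qp q q k ≠ 0 := by
  rw [qp]
  refine Finset.prod_ne_zero_iff.2 fun j _ => fun h0 =>
    hroot (j+1) (by omega) (by linear_combination -h0)

lemma qpc_ne (q c : ℂ) (hq : q ≠ 0)
    (h : ∀ m : ℕ, 1 ≤ m → c ≠ q ^ (-(m:ℤ))) (k : ℕ) : qp q (q * c) k ≠ 0 := by
  rw [qp]
  refine Finset.prod_ne_zero_iff.2 fun j _ => fun h0 => ?_
  exact one_sub_ne q c hq (j+1) (by omega) (h (j+1) (by omega)) (by linear_combination h0)

/-- coefficient of the symmetric big q-Jacobi polynomial in the basis `(x;q)_k`. -/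
noncomputable def C (q a : ℂ) (n k : ℕ) : ℂ :=
  qp q ((q ^ n)⁻¹) k * qp q (q ^ (n+1) * a ^ 2) k /
    (qp q q k * qp q (q * a) k * qp q (q * -a) k) * q ^ k

lemma bigq_eq (q a x : ℂ) (n : ℕ) :
    bigqJacobi q a a (-a) x n = ∑ k ∈ Finset.range (n+1), C q a n k * qp q x k := by
  unfold bigqJacobi C
  refine Finset.sum_congr rfl fun k _ => ?_
  rw [show q ^ (-(n:ℤ)) = (q ^ n)⁻¹ by rw [zpow_neg, zpow_natCast],
      show q ^ ((n:ℤ)+1) = q ^ (n+1) by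
        rw [show ((n:ℤ)+1) = ((n+1:ℕ):ℤ) by push_cast; ring, zpow_natCast]]
  ring

lemma C_zero (q a : ℂ) (n : ℕ) : C q a n 0 = 1 := by simp [C, qp]

lemma C_eq_zero (q a : ℂ) (hq : q ≠ 0) {n k : ℕ} (h : n < k) : C q a n k = 0 := by
  rw [C, qp_eq_zero h (inv_mul_cancel₀ (pow_ne_zero n hq))]
  simp

noncomputable def Sf (q : ℂ) (n k : ℕ) : ℂ := ∏ j ∈ Finset.range k, (q ^ n - q ^ j)

lemma Sf_succ (q : ℂ) (n k : ℕ) : Sf q n (k+1) = Sf q n k * (q ^ n - q ^ k) :=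
  Finset.prod_range_succ _ _

lemma Sf_succ' (q : ℂ) (n k : ℕ) :
    Sf q (n+1) (k+1) = (q ^ (n+1) - 1) * (q ^ k * Sf q n k) := by
  rw [Sf, Finset.prod_range_succ']
  simp only [pow_zero]
  rw [mul_comm]
  congr 1
  calc ∏ j ∈ Finset.range k, (q^(n+1) - q^(j+1))
      = ∏ j ∈ Finset.range k, (q * (q^n - q^j)) :=
        Finset.prod_congr rfl (fun j _ => by ring)
    _ = (∏ _j ∈ Finset.range k, q) * Sf q n k := Finset.prod_mul_distrib
    _ = q^k * Sf q n k := by rw [Finset.prod_const, Finset.card_range]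

lemma qp_inv_eq (q : ℂ) (hq : q ≠ 0) (n k : ℕ) :
    qp q ((q ^ n)⁻¹) k = Sf q n k / (q ^ n) ^ k := by
  have hp : (q:ℂ)^n ≠ 0 := pow_ne_zero _ hq
  rw [eq_div_iff (pow_ne_zero _ hp)]
  induction k with
  | zero => simp [qp, Sf]
  | succ k ih =>
    rw [qp_succ, Sf_succ, pow_succ, ← ih]
    have h : (1 - (q^n)⁻¹ * q^k) * q^n = q^n - q^k := by field_simp
    linear_combination (qp q ((q^n)⁻¹) k * (q^n)^k) * h


lemma C_eq (q a : ℂ) (hq : q ≠ 0) (n k : ℕ) :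
    C q a n k = Sf q n k * qp q (q^(n+1)*a^2) k * q^k /
      ((q^n)^k * (qp q q k * qp q (q*a) k * qp q (q*-a) k)) := by
  rw [C, qp_inv_eq q hq]
  ring

lemma core (q a : ℂ) (hq : q ≠ 0) (hroot : ∀ m : ℕ, 1 ≤ m → q ^ m ≠ 1)
    (hA : ∀ m : ℕ, 1 ≤ m → a ≠ q ^ (-(m : ℤ)))
    (hA' : ∀ m : ℕ, 1 ≤ m → -a ≠ q ^ (-(m : ℤ)))
    (hA2 : ∀ m : ℕ, 1 ≤ m → a ^ 2 ≠ q ^ (-(m : ℤ))) (N m : ℕ) :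
    (1 - q^(2*N+3)*a^2) * (C q a (N+1) (m+1) / q^(m+1))
      - (1 - q^(2*N+3)*a^2) * (C q a (N+1) m / q^m)
    = (1 - q^(N+2)*a^2) * C q a (N+2) (m+1)
      + q^(N+2)*a^2*(1 - q^(N+1)) * C q a N (m+1) := by
  have hv1 : qp q q m ≠ 0 := qpq_ne q hroot m
  have hv2 : qp q (q*a) m ≠ 0 := qpc_ne q a hq hA m
  have hv3 : qp q (q*-a) m ≠ 0 := by
    have := qpc_ne q (-a) hq hA' m; simpa using this
  have hf1 : (1:ℂ) - q*q^m ≠ 0 := fun h0 => hroot (m+1) (by omega) (by linear_combination -h0)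
  have hf2 : (1:ℂ) - q*a*q^m ≠ 0 := by
    have := one_sub_ne q a hq (m+1) (by omega) (hA (m+1) (by omega))
    intro h0; exact this (by linear_combination h0)
  have hf3 : (1:ℂ) - q*-a*q^m ≠ 0 := by
    have := one_sub_ne q (-a) hq (m+1) (by omega) (hA' (m+1) (by omega))
    intro h0; exact this (by linear_combination h0)
  have hq1 : (q:ℂ)^(N+1) - 1 ≠ 0 := sub_ne_zero.2 (hroot (N+1) (by omega))
  have hne2 : (1:ℂ) - q^(N+2)*a^2 ≠ 0 :=
    one_sub_ne q (a^2) hq (N+2) (by omega) (hA2 (N+2) (by omega))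
  have hVF : (qp q q m * (1 - q*q^m) * ((qp q (q*a) m) * (1 - q*a*q^m)) * ((qp q (q*-a) m) * (1 - q*-a*q^m))) ≠ 0 :=
    mul_ne_zero (mul_ne_zero (mul_ne_zero hv1 hf1) (mul_ne_zero hv2 hf2)) (mul_ne_zero hv3 hf3)
  have hpp : ∀ i j : ℕ, ((q:ℂ)^i)^j ≠ 0 := fun i j => pow_ne_zero _ (pow_ne_zero _ hq)
  have hD : (q^(N+1))^(m+1) * (q^(N+2))^(m+1) * q^(m+1) * (q^(N+1)-1) * (1 - q^(N+2)*a^2) * ((qp q q m) * (qp q (q*a) m) * (qp q (q*-a) m)) * ((1 - q*q^m) * (1 - q*a*q^m) * (1 - q*-a*q^m)) ≠ 0 := by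
    refine mul_ne_zero (mul_ne_zero (mul_ne_zero (mul_ne_zero (mul_ne_zero
      (mul_ne_zero (hpp _ _) (hpp _ _)) (pow_ne_zero _ hq)) hq1) hne2)
      (mul_ne_zero (mul_ne_zero hv1 hv2) hv3)) (mul_ne_zero (mul_ne_zero hf1 hf2) hf3)
  have hYw1 : (q^(N+1))^(m+1) * (qp q q m * (1 - q*q^m) * ((qp q (q*a) m) * (1 - q*a*q^m)) * ((qp q (q*-a) m) * (1 - q*-a*q^m))) * q^(m+1) ≠ 0 := mul_ne_zero (mul_ne_zero (hpp _ _) hVF) (pow_ne_zero _ hq)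
  have hYw2 : (q^(N+1))^m * ((qp q q m) * (qp q (q*a) m) * (qp q (q*-a) m)) * q^m ≠ 0 := mul_ne_zero (mul_ne_zero (hpp _ _)
    (mul_ne_zero (mul_ne_zero hv1 hv2) hv3)) (pow_ne_zero _ hq)
  have hY3 : (q^(N+2))^(m+1) * (qp q q m * (1 - q*q^m) * ((qp q (q*a) m) * (1 - q*a*q^m)) * ((qp q (q*-a) m) * (1 - q*-a*q^m))) ≠ 0 := mul_ne_zero (hpp _ _) hVF
  have hY4 : (q^N)^(m+1) * (qp q q m * (1 - q*q^m) * ((qp q (q*a) m) * (1 - q*a*q^m)) * ((qp q (q*-a) m) * (1 - q*-a*q^m))) ≠ 0 := mul_ne_zero (hpp _ _) hVF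
  have s1 : Sf q (N+1) (m+1) = Sf q (N+1) m * (q^(N+1) - q^m) := Sf_succ ..
  have s2 : Sf q (N+2) (m+1) = (q^(N+2)-1) * (q^m * Sf q (N+1) m) := Sf_succ' ..
  have s3c : Sf q N (m+1) * ((q^(N+1)-1) * q^(m+1))
      = Sf q (N+1) m * (q^(N+1)-q^m) * (q^(N+1)-q^(m+1)) := by
    have t1 : Sf q (N+1) (m+2) = (q^(N+1)-1)*(q^(m+1)*Sf q N (m+1)) := Sf_succ' ..
    have t2 : Sf q (N+1) (m+2) = Sf q (N+1) m * (q^(N+1)-q^m)*(q^(N+1)-q^(m+1)) := by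
      rw [Sf_succ, Sf_succ]
    linear_combination t2 - t1
  have e2 : qp q (q^(N+2)*a^2) (m+1) = qp q (q^(N+2)*a^2) m * (1 - q^(N+2)*a^2*q^m) :=
    qp_succ ..
  have e5c : qp q (q^(N+3)*a^2) (m+1) * (1 - q^(N+2)*a^2)
      = (qp q (q^(N+2)*a^2) m) * (1 - q^(N+2)*a^2*q^m) * (1 - q^(N+2)*a^2*q^(m+1)) := by
    have h1 : qp q (q^(N+2)*a^2) (m+2) = (1 - q^(N+2)*a^2) * qp q (q^(N+3)*a^2) (m+1) := by
      rw [qp_succ']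
      congr 2
      ring
    have h2 : qp q (q^(N+2)*a^2) (m+2)
        = qp q (q^(N+2)*a^2) m * (1 - q^(N+2)*a^2*q^m) * (1 - q^(N+2)*a^2*q^(m+1)) := by
      rw [qp_succ, qp_succ]
    linear_combination h2 - h1
  have e6 : qp q (q^(N+1)*a^2) (m+1) = (1 - q^(N+1)*a^2) * qp q (q^(N+2)*a^2) m := by
    rw [qp_succ']
    congr 2
    ring
  have ev1 : qp q q (m+1) = qp q q m * (1 - q*q^m) := qp_succ ..
  have ev2 : qp q (q*a) (m+1) = qp q (q*a) m * (1 - q*a*q^m) := qp_succ ..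
  have ev3 : qp q (q*-a) (m+1) = qp q (q*-a) m * (1 - q*-a*q^m) := qp_succ ..
  have g1 : ((q:ℂ)^(N+1))^(m+1) = (q^N)^m * q^N * q^m * q := by
    rw [← pow_mul, show (N+1)*(m+1) = N*m+N+m+1 by ring, pow_add, pow_add, pow_add, pow_mul,
      pow_one]
  have g2 : ((q:ℂ)^(N+2))^(m+1) = (q^N)^m * q^N * (q^m)^2 * q^2 := by
    rw [← pow_mul, show (N+2)*(m+1) = N*m+N+m*2+2 by ring, pow_add, pow_add, pow_add, pow_mul,
      pow_mul]
  have g3 : ((q:ℂ)^N)^(m+1) = (q^N)^m * q^N := pow_succ _ _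
  have g5 : (q:ℂ)^(N+2) = q^N*q^2 := pow_add _ _ _
  have g6 : (q:ℂ)^(N+1) = q^N*q := pow_succ _ _
  have g7 : (q:ℂ)^(m+1) = q^m*q := pow_succ _ _
  have g8 : (q:ℂ)^(2*N+3) = (q^N)^2*q^3 := by
    rw [show 2*N+3 = N*2+3 by ring, pow_add, pow_mul]
  have g9 : (q:ℂ)^(N+3) = q^N*q^3 := pow_add _ _ _
  have h1 : (1 - q^(2*N+3)*a^2) * (C q a (N+1) (m+1) / q^(m+1))
      = ((1 - q^(2*N+3)*a^2) * ((Sf q (N+1) m * (q^(N+1) - q^m)) * ((qp q (q^(N+2)*a^2) m) * (1 - q^(N+2)*a^2*q^m)) * q^(m+1)) * ((q^(N+2))^(m+1) * (q^(N+1)-1) * (1 - q^(N+2)*a^2))) / ((q^(N+1))^(m+1) * (q^(N+2))^(m+1) * q^(m+1) * (q^(N+1)-1) * (1 - q^(N+2)*a^2) * ((qp q q m) * (qp q (q*a) m) * (qp q (q*-a) m)) * ((1 - q*q^m) * (1 - q*a*q^m) * (1 - q*-a*q^m))) := by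
    rw [C_eq q a hq, show N+1+1 = N+2 from rfl, s1, e2, ev1, ev2, ev3, div_div,
      ← mul_div_assoc, div_eq_div_iff hYw1 hD]
    ring
  have h2 : (1 - q^(2*N+3)*a^2) * (C q a (N+1) m / q^m)
      = ((1 - q^(2*N+3)*a^2) * (Sf q (N+1) m * (qp q (q^(N+2)*a^2) m) * q^m) * (q^(N+1) * (q^(N+2))^(m+1) * q * (q^(N+1)-1) * (1 - q^(N+2)*a^2) * ((1 - q*q^m) * (1 - q*a*q^m) * (1 - q*-a*q^m)))) / ((q^(N+1))^(m+1) * (q^(N+2))^(m+1) * q^(m+1) * (q^(N+1)-1) * (1 - q^(N+2)*a^2) * ((qp q q m) * (qp q (q*a) m) * (qp q (q*-a) m)) * ((1 - q*q^m) * (1 - q*a*q^m) * (1 - q*-a*q^m))) := by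
    rw [C_eq q a hq, show N+1+1 = N+2 from rfl, div_div,
      ← mul_div_assoc, div_eq_div_iff hYw2 hD]
    ring
  have h3 : (1 - q^(N+2)*a^2) * C q a (N+2) (m+1)
      = (((q^(N+2)-1) * (q^m * Sf q (N+1) m)) * ((qp q (q^(N+2)*a^2) m) * (1 - q^(N+2)*a^2*q^m) * (1 - q^(N+2)*a^2*q^(m+1))) * q^(m+1) * ((q^(N+1))^(m+1) * q^(m+1) * (q^(N+1)-1)) * (1 - q^(N+2)*a^2)) / ((q^(N+1))^(m+1) * (q^(N+2))^(m+1) * q^(m+1) * (q^(N+1)-1) * (1 - q^(N+2)*a^2) * ((qp q q m) * (qp q (q*a) m) * (qp q (q*-a) m)) * ((1 - q*q^m) * (1 - q*a*q^m) * (1 - q*-a*q^m))) := by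
    rw [C_eq q a hq, show N+2+1 = N+3 from rfl, s2, ev1, ev2, ev3,
      ← mul_div_assoc, div_eq_div_iff hY3 hD]
    linear_combination ((1 - q^(N+2)*a^2) * ((q^(N+2)-1) * (q^m * Sf q (N+1) m)) * q^(m+1) * ((q^(N+2))^(m+1) * (qp q q m * (1 - q*q^m) * ((qp q (q*a) m) * (1 - q*a*q^m)) * ((qp q (q*-a) m) * (1 - q*-a*q^m)))) * ((q^(N+1))^(m+1) * q^(m+1) * (q^(N+1)-1))) * e5c
  have h4 : q^(N+2)*a^2*(1 - q^(N+1)) * C q a N (m+1)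
      = (q^(N+2)*a^2 * (1-q^(N+1)) * ((1 - q^(N+1)*a^2) * (qp q (q^(N+2)*a^2) m)) * (Sf q (N+1) m * (q^(N+1)-q^m) * (q^(N+1)-q^(m+1))) * q^(m+1) * (q^(m+1) * (q^(N+2))^(m+1) * (1 - q^(N+2)*a^2))) / ((q^(N+1))^(m+1) * (q^(N+2))^(m+1) * q^(m+1) * (q^(N+1)-1) * (1 - q^(N+2)*a^2) * ((qp q q m) * (qp q (q*a) m) * (qp q (q*-a) m)) * ((1 - q*q^m) * (1 - q*a*q^m) * (1 - q*-a*q^m))) := by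
    rw [C_eq q a hq, e6, ev1, ev2, ev3,
      ← mul_div_assoc, div_eq_div_iff hY4 hD]
    simp only [g1, g2, g3]
    simp only [g5, g6, g7]
    simp only [g6, g7] at s3c
    generalize hP : (q:ℂ)^N = P at s3c ⊢
    generalize hK : P^m = K
    generalize hM : (q:ℂ)^m = M at s3c ⊢
    linear_combination ((P*q^2*a^2) * (1-P*q) * ((1 - P*q*a^2) * qp q (P*q^2*a^2) m) * (M*q) *
      (K*P * (qp q q m * (1 - q*M) * (qp q (q*a) m * (1 - q*a*M)) * (qp q (q*-a) m * (1 - q*-a*M)))) *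
      ((M*q) * (K*P*M^2*q^2) * (1 - P*q^2*a^2))) * s3c
  rw [h1, h2, h3, h4, div_sub_div_same, ← add_div]
  congr 1
  simp only [g1, g2, g3]
  simp only [g5, g6, g7, g8]
  generalize hP : (q:ℂ)^N = P
  generalize hK : P^m = K
  generalize hM : (q:ℂ)^m = M
  ring


lemma recur (q a x : ℂ) (hq : q ≠ 0) (hroot : ∀ m : ℕ, 1 ≤ m → q ^ m ≠ 1)
    (hA : ∀ m : ℕ, 1 ≤ m → a ≠ q ^ (-(m : ℤ)))
    (hA' : ∀ m : ℕ, 1 ≤ m → -a ≠ q ^ (-(m : ℤ)))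
    (hA2 : ∀ m : ℕ, 1 ≤ m → a ^ 2 ≠ q ^ (-(m : ℤ))) (N : ℕ) :
    (1 - q^(2*N+3)*a^2) * (x * bigqJacobi q a a (-a) x (N+1))
    = (1 - q^(N+2)*a^2) * bigqJacobi q a a (-a) x (N+2)
      + q^(N+2)*a^2*(1 - q^(N+1)) * bigqJacobi q a a (-a) x N := by
  have hqk : ∀ k : ℕ, (q:ℂ)^k ≠ 0 := fun k => pow_ne_zero _ hq
  rw [bigq_eq, bigq_eq, bigq_eq]
  have hstep : ∀ k : ℕ, (1 - q^(2*N+3)*a^2) * (C q a (N+1) k / q^k) * qp q x (k+1)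
      = (1 - q^(2*N+3)*a^2) * (C q a (N+1) (k+1) / q^(k+1)) * qp q x (k+1)
        - ((1 - q^(N+2)*a^2) * C q a (N+2) (k+1)
            + q^(N+2)*a^2*(1 - q^(N+1)) * C q a N (k+1)) * qp q x (k+1) :=
    fun k => by linear_combination (-(qp q x (k+1))) * core q a hq hroot hA hA' hA2 N k
  have hL : (1 - q^(2*N+3)*a^2) * (x * ∑ k ∈ Finset.range (N+2), C q a (N+1) k * qp q x k)
      = ∑ k ∈ Finset.range (N+2),
          ((1 - q^(2*N+3)*a^2) * (C q a (N+1) k / q^k) * qp q x k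
            - (1 - q^(2*N+3)*a^2) * (C q a (N+1) k / q^k) * qp q x (k+1)) := by
    rw [Finset.mul_sum, Finset.mul_sum]
    refine Finset.sum_congr rfl fun k _ => ?_
    rw [qp_succ]
    field_simp
    ring
  have hsplit : ∑ k ∈ Finset.range (N+2),
          ((1 - q^(2*N+3)*a^2) * (C q a (N+1) k / q^k) * qp q x k
            - (1 - q^(2*N+3)*a^2) * (C q a (N+1) k / q^k) * qp q x (k+1))
      = (∑ k ∈ Finset.range (N+2), (1 - q^(2*N+3)*a^2) * (C q a (N+1) k / q^k) * qp q x k)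
        - ∑ k ∈ Finset.range (N+2), (1 - q^(2*N+3)*a^2) * (C q a (N+1) k / q^k) * qp q x (k+1) :=
    Finset.sum_sub_distrib _ _
  have hext : ∑ k ∈ Finset.range (N+3), (1 - q^(2*N+3)*a^2) * (C q a (N+1) k / q^k) * qp q x k
      = ∑ k ∈ Finset.range (N+2), (1 - q^(2*N+3)*a^2) * (C q a (N+1) k / q^k) * qp q x k := by
    rw [Finset.sum_range_succ, C_eq_zero q a hq (show N+1 < N+2 by omega)]
    simp
  have hW : ∑ k ∈ Finset.range (N+2), (1 - q^(2*N+3)*a^2) * (C q a (N+1) k / q^k) * qp q x (k+1)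
      = (∑ k ∈ Finset.range (N+2),
            (1 - q^(2*N+3)*a^2) * (C q a (N+1) (k+1) / q^(k+1)) * qp q x (k+1))
        - ∑ k ∈ Finset.range (N+2),
            ((1 - q^(N+2)*a^2) * C q a (N+2) (k+1)
              + q^(N+2)*a^2*(1 - q^(N+1)) * C q a N (k+1)) * qp q x (k+1) := by
    rw [← Finset.sum_sub_distrib]
    exact Finset.sum_congr rfl fun k _ => hstep k
  have hU : ∑ k ∈ Finset.range (N+3), (1 - q^(2*N+3)*a^2) * (C q a (N+1) k / q^k) * qp q x k
      = (∑ k ∈ Finset.range (N+2),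
          (1 - q^(2*N+3)*a^2) * (C q a (N+1) (k+1) / q^(k+1)) * qp q x (k+1))
        + (1 - q^(2*N+3)*a^2) * (C q a (N+1) 0 / q^0) * qp q x 0 :=
    Finset.sum_range_succ' _ _
  have hR : ∑ k ∈ Finset.range (N+3),
        ((1 - q^(N+2)*a^2) * C q a (N+2) k
          + q^(N+2)*a^2*(1 - q^(N+1)) * C q a N k) * qp q x k
      = (∑ k ∈ Finset.range (N+2),
          ((1 - q^(N+2)*a^2) * C q a (N+2) (k+1)
            + q^(N+2)*a^2*(1 - q^(N+1)) * C q a N (k+1)) * qp q x (k+1))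
        + ((1 - q^(N+2)*a^2) * C q a (N+2) 0
            + q^(N+2)*a^2*(1 - q^(N+1)) * C q a N 0) * qp q x 0 :=
    Finset.sum_range_succ' _ _
  have hPN : ∑ k ∈ Finset.range (N+3), C q a N k * qp q x k
      = ∑ k ∈ Finset.range (N+1), C q a N k * qp q x k := by
    rw [Finset.sum_range_succ, Finset.sum_range_succ,
      C_eq_zero q a hq (show N < N+1 by omega), C_eq_zero q a hq (show N < N+2 by omega)]
    ring
  have hRHS : (1 - q^(N+2)*a^2) * (∑ k ∈ Finset.range (N+3), C q a (N+2) k * qp q x k)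
        + q^(N+2)*a^2*(1 - q^(N+1)) * (∑ k ∈ Finset.range (N+1), C q a N k * qp q x k)
      = ∑ k ∈ Finset.range (N+3),
          ((1 - q^(N+2)*a^2) * C q a (N+2) k
            + q^(N+2)*a^2*(1 - q^(N+1)) * C q a N k) * qp q x k := by
    rw [← hPN, Finset.mul_sum, Finset.mul_sum, ← Finset.sum_add_distrib]
    exact Finset.sum_congr rfl fun k _ => by ring
  rw [hRHS, hL, hsplit, ← hext, hW]
  simp only [C_zero, qp_zero, pow_zero] at hU hR
  linear_combination hU - hR

lemma P_zero (q a x : ℂ) : bigqJacobi q a a (-a) x 0 = 1 := by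
  rw [bigq_eq, Finset.sum_range_one, C_zero, qp_zero, mul_one]

lemma P_one (q a x : ℂ) (hq : q ≠ 0) (hroot : ∀ m : ℕ, 1 ≤ m → q ^ m ≠ 1)
    (hA : ∀ m : ℕ, 1 ≤ m → a ≠ q ^ (-(m : ℤ)))
    (hA' : ∀ m : ℕ, 1 ≤ m → -a ≠ q ^ (-(m : ℤ))) :
    bigqJacobi q a a (-a) x 1 = x := by
  have h1 : (1:ℂ) - q ≠ 0 := sub_ne_zero.2 fun h => hroot 1 le_rfl (by rw [pow_one, ← h])
  have h2 : (1:ℂ) - q*a ≠ 0 := by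
    have := one_sub_ne q a hq 1 le_rfl (hA 1 le_rfl)
    intro h0; exact this (by linear_combination h0)
  have h3 : (1:ℂ) - q*-a ≠ 0 := by
    have := one_sub_ne q (-a) hq 1 le_rfl (hA' 1 le_rfl)
    intro h0; exact this (by linear_combination h0)
  rw [bigq_eq, Finset.sum_range_succ, Finset.sum_range_one, C_zero, qp_zero, mul_one]
  unfold C
  simp only [qp_succ, qp_zero, pow_zero, pow_one, mul_one, one_mul]
  have hD : ((1:ℂ)-q)*(1-q*a)*(1-q*-a) ≠ 0 := mul_ne_zero (mul_ne_zero h1 h2) h3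
  rw [eq_comm, ← sub_eq_iff_eq_add', div_mul_eq_mul_div, div_mul_eq_mul_div, eq_comm,
    div_eq_iff hD]
  linear_combination (-((1-q^2*a^2)*(1-x))) * (mul_inv_cancel₀ hq)

end Stmt8Aux


/-- Symmetry of the symmetric big q-Jacobi polynomials:
`P_n(-x;a,a,-a;q) = (-1)^n P_n(x;a,a,-a;q)`. -/
theorem stmt8 (q a x : ℂ) (n : ℕ)
    (hq : q ≠ 0) (hroot : ∀ m : ℕ, 1 ≤ m → q ^ m ≠ 1) (ha : a ≠ 0)
    (hA : ∀ m : ℕ, 1 ≤ m → a ≠ q ^ (-(m : ℤ)))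
    (hA' : ∀ m : ℕ, 1 ≤ m → -a ≠ q ^ (-(m : ℤ)))
    (hA2 : ∀ m : ℕ, 1 ≤ m → a ^ 2 ≠ q ^ (-(m : ℤ))) :
    bigqJacobi q a a (-a) (-x) n = (-1) ^ n * bigqJacobi q a a (-a) x n := by
  suffices h : ∀ n : ℕ,
      (bigqJacobi q a a (-a) (-x) n = (-1)^n * bigqJacobi q a a (-a) x n) ∧
      (bigqJacobi q a a (-a) (-x) (n+1) = (-1)^(n+1) * bigqJacobi q a a (-a) x (n+1)) from
    (h n).1
  intro n
  induction n with
  | zero =>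
    constructor
    · rw [Stmt8Aux.P_zero, Stmt8Aux.P_zero, pow_zero, mul_one]
    · rw [Stmt8Aux.P_one q a (-x) hq hroot hA hA', Stmt8Aux.P_one q a x hq hroot hA hA']
      ring
  | succ n ih =>
    refine ⟨ih.2, ?_⟩
    have hr1 := Stmt8Aux.recur q a (-x) hq hroot hA hA' hA2 n
    have hr2 := Stmt8Aux.recur q a x hq hroot hA hA' hA2 n
    rw [ih.1, ih.2] at hr1
    have hne : (1:ℂ) - q^(n+2)*a^2 ≠ 0 :=
      Stmt8Aux.one_sub_ne q (a^2) hq (n+2) (by omega) (hA2 (n+2) (by omega))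
    apply mul_left_cancel₀ hne
    linear_combination (-1 : ℂ) * hr1 + (-1:ℂ)^n * hr2
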